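/- Let A be a unital C*-algebra, let x₁, …, x_n ∈ A, let x = Σ_{i=1}^n x_i* x_i, and let p ∈ A satisfy 0 ≤ p ≤ 1. Then for each i one has ‖x_i − x_i·p‖² ≤ ‖x − p·x‖. In particular, if ‖x − p·x‖ < ε² for some ε > 0, then ‖x_i − x_i·p‖ < ε for all i. -/
import Mathlib


/-- Let `x₁, …, xₙ` be elements of a unital C*-algebra, let `x = Σ xᵢ* xᵢ` and let
`0 ≤ p ≤ 1`.  Then `‖xᵢ - xᵢ·p‖² ≤ ‖x - p·x‖` for each `i`; in particular, if
`‖x - p·x‖ < ε²` then `‖xᵢ - xᵢ·p‖ < ε` for all `i`. -/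
theorem norm_sub_mul_sq_le {A : Type*} [CStarAlgebra A] [PartialOrder A] [StarOrderedRing A]
    {n : ℕ} (x : Fin n → A) (p : A) (hp0 : 0 ≤ p) (hp1 : p ≤ 1) :
    (∀ i, ‖x i - x i * p‖ ^ 2 ≤
      ‖(∑ j, star (x j) * x j) - p * ∑ j, star (x j) * x j‖) ∧
    (∀ ε : ℝ, 0 < ε →
      ‖(∑ j, star (x j) * x j) - p * ∑ j, star (x j) * x j‖ < ε ^ 2 →
      ∀ i, ‖x i - x i * p‖ < ε) := by
  set q := 1 - p with hq
  have hq0 : 0 ≤ q := by rwa [hq, sub_nonneg]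
  have hq1 : q ≤ 1 := by rw [hq]; simpa using hp0
  have hqsa : IsSelfAdjoint q := IsSelfAdjoint.of_nonneg hq0
  have hqnorm : ‖q‖ ≤ 1 := by
    rcases subsingleton_or_nontrivial A with h | h
    · simp [Subsingleton.elim q 0]
    · calc ‖q‖ ≤ ‖(1 : A)‖ := CStarAlgebra.norm_le_norm_of_nonneg_of_le hq0 hq1
        _ = 1 := CStarRing.norm_one
  set s := ∑ j, star (x j) * x j with hs
  have key : ∀ i, ‖x i - x i * p‖ ^ 2 ≤ ‖s - p * s‖ := by
    intro i
    have h1 : x i - x i * p = x i * q := by rw [hq, mul_one_sub]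
    have h2 : s - p * s = q * s := by rw [hq, one_sub_mul]
    rw [h1, h2]
    have hsq : ‖x i * q‖ ^ 2 = ‖q * (star (x i) * x i) * q‖ := by
      rw [sq, ← CStarRing.norm_star_mul_self (x := x i * q), star_mul, hqsa.star_eq,
        mul_assoc, mul_assoc, mul_assoc]
    rw [hsq]
    have hle : star (x i) * x i ≤ s := by
      refine Finset.single_le_sum (f := fun j => star (x j) * x j)
        (fun j _ => star_mul_self_nonneg (x j)) (Finset.mem_univ i)
    have hconj : q * (star (x i) * x i) * q ≤ q * s * q :=
      conjugate_le_conjugate_of_nonneg hle hq0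
    have hnn : 0 ≤ q * (star (x i) * x i) * q :=
      conjugate_nonneg_of_nonneg (star_mul_self_nonneg (x i)) hq0
    calc ‖q * (star (x i) * x i) * q‖ ≤ ‖q * s * q‖ :=
          CStarAlgebra.norm_le_norm_of_nonneg_of_le hnn hconj
      _ ≤ ‖q * s‖ * ‖q‖ := norm_mul_le _ _
      _ ≤ ‖q * s‖ * 1 := by
          exact mul_le_mul_of_nonneg_left hqnorm (norm_nonneg _)
      _ = ‖q * s‖ := mul_one _
  refine ⟨key, fun ε hε hlt i => ?_⟩
  have := (key i).trans_lt hlt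
  exact lt_of_pow_lt_pow_left₀ 2 hε.le this
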